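/- Let K be a compact subset (in the topology of weak convergence) of the invariant manifold M_ϑ = {ϑ_e^z : z ≥ 0}. Then for every ε > 0 and every R > 0 there exists κ > 0 such that for all ξ ∈ K: ξ([x, x+κ] × ℝ) ≤ ε for every x ∈ [0, R], and ξ([0,∞) × [y, y+κ]) ≤ ε for every y ∈ [−R, R]. -/

import Mathlib

open MeasureTheory Set Filter Topology
open scoped ENNReal NNReal

noncomputable section

/-- The right half-plane `ℍ₊ = [0,∞) × ℝ`, as a subset of `ℝ × ℝ`. -/
def Hplus : Set (ℝ × ℝ) := {p | 0 ≤ p.1}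

/-- Translation of a set: `B + w = {b + w : b ∈ B}`. -/
def shiftSet (B : Set (ℝ × ℝ)) (w : ℝ × ℝ) : Set (ℝ × ℝ) := (fun b => b + w) '' B

lemma shiftSet_eq (B : Set (ℝ × ℝ)) (w : ℝ × ℝ) :
    shiftSet B w = (fun p => p - w) ⁻¹' B := by
  ext p
  constructor
  · rintro ⟨b, hb, rfl⟩; simpa using hb
  · intro h; exact ⟨p - w, h, by simp⟩

/-- Key Tonelli estimate: the total time a moving window of width `κ` covers
points is at most `κ`. -/
lemma strip_lintegral_le (ϑ : Measure (ℝ × ℝ)) [IsProbabilityMeasure ϑ]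
    (g : ℝ × ℝ → ℝ) (hg : Measurable g) (κ : ℝ) :
    ∫⁻ u in Ioi (0:ℝ), ϑ {p | g p ≤ u ∧ u ≤ g p + κ} ≤ ENNReal.ofReal κ := by
  set f : ℝ → ℝ × ℝ → ℝ≥0∞ := fun u p => if g p ≤ u ∧ u ≤ g p + κ then 1 else 0 with hf
  have hmeas : Measurable (Function.uncurry f) := by
    have : MeasurableSet {x : ℝ × (ℝ × ℝ) | g x.2 ≤ x.1 ∧ x.1 ≤ g x.2 + κ} :=
      (measurableSet_le (hg.comp measurable_snd) measurable_fst).inter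
        (measurableSet_le measurable_fst ((hg.comp measurable_snd).add_const κ))
    exact Measurable.ite this measurable_const measurable_const
  have step1 : ∀ u : ℝ, ϑ {p : ℝ × ℝ | g p ≤ u ∧ u ≤ g p + κ} = ∫⁻ p, f u p ∂ϑ := by
    intro u
    have hsm : MeasurableSet {p : ℝ × ℝ | g p ≤ u ∧ u ≤ g p + κ} :=
      (measurableSet_le hg measurable_const).inter
        (measurableSet_le measurable_const (hg.add_const κ))
    rw [← lintegral_indicator_one hsm]
    refine lintegral_congr fun p => ?_
    simp [hf, Set.indicator_apply]
  have step2 : ∀ p : ℝ × ℝ, ∫⁻ u in Ioi (0:ℝ), f u p ≤ ENNReal.ofReal κ := by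
    intro p
    have heq : ∀ u : ℝ, f u p = (Icc (g p) (g p + κ)).indicator (fun _ => (1:ℝ≥0∞)) u := by
      intro u; simp [hf, Set.indicator_apply, mem_Icc]
    calc ∫⁻ u in Ioi (0:ℝ), f u p
        = ∫⁻ u in Ioi (0:ℝ), (Icc (g p) (g p + κ)).indicator (fun _ => (1:ℝ≥0∞)) u :=
          lintegral_congr fun u => heq u
      _ = (volume.restrict (Ioi (0:ℝ))) (Icc (g p) (g p + κ)) :=
          lintegral_indicator_one measurableSet_Icc
      _ = volume (Icc (g p) (g p + κ) ∩ Ioi (0:ℝ)) :=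
          Measure.restrict_apply measurableSet_Icc
      _ ≤ volume (Icc (g p) (g p + κ)) := measure_mono inter_subset_left
      _ = ENNReal.ofReal κ := by rw [Real.volume_Icc]; simp
  calc ∫⁻ u in Ioi (0:ℝ), ϑ {p | g p ≤ u ∧ u ≤ g p + κ}
      = ∫⁻ u in Ioi (0:ℝ), ∫⁻ p, f u p ∂ϑ := lintegral_congr fun u => step1 u
    _ = ∫⁻ p, (∫⁻ u in Ioi (0:ℝ), f u p) ∂ϑ := lintegral_lintegral_swap hmeas.aemeasurable
    _ ≤ ∫⁻ p, ENNReal.ofReal κ ∂ϑ := lintegral_mono step2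
    _ = ENNReal.ofReal κ := by simp

lemma cond_iff (z u x κ p1 : ℝ) (hz : 0 < z) :
    (x ≤ p1 - u / z ∧ p1 - u / z ≤ x + κ) ↔
      (z * (p1 - x - κ) ≤ u ∧ u ≤ z * (p1 - x - κ) + z * κ) := by
  constructor
  · rintro ⟨h1, h2⟩
    have h1' : u ≤ (p1 - x) * z := (div_le_iff₀ hz).mp (by linarith)
    have h2' : (p1 - x - κ) * z ≤ u := (le_div_iff₀ hz).mp (by linarith)
    constructor <;> nlinarith
  · rintro ⟨h1, h2⟩
    have h1' : u / z ≤ p1 - x := (div_le_iff₀ hz).mpr (by nlinarith)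
    have h2' : p1 - x - κ ≤ u / z := (le_div_iff₀ hz).mpr (by nlinarith)
    constructor <;> linarith

/-- on a weakly compact subset `S` of the invariant manifold
`M_ϑ = {ϑ_e^z : z ≥ 0}`, thin vertical and horizontal strips (within a window of size `R`)
have uniformly small mass. -/
theorem stmt_17 (α : ℝ) (hα : 0 < α) (ϑ : Measure (ℝ × ℝ)) [IsProbabilityMeasure ϑ]
    (hϑsupp : ϑ {p : ℝ × ℝ | p.1 < 0} = 0)
    (hϑ0 : ϑ {p : ℝ × ℝ | p.1 = 0} = 0)
    (hϑmean : ∫⁻ p, ENNReal.ofReal p.1 ∂ϑ = ENNReal.ofReal α⁻¹)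
    (τ : ℝ → FiniteMeasure (ℝ × ℝ))
    (hτ0 : (τ 0 : Measure (ℝ × ℝ)) = 0)
    (hτsupp : ∀ z : ℝ, 0 < z → (τ z : Measure (ℝ × ℝ)) {p : ℝ × ℝ | p.1 < 0} = 0)
    (hτ : ∀ z : ℝ, 0 < z → ∀ B : Set (ℝ × ℝ), MeasurableSet B → B ⊆ Hplus →
      (τ z : Measure (ℝ × ℝ)) B
        = ENNReal.ofReal α * ∫⁻ u in Ioi (0 : ℝ), ϑ (shiftSet B (u / z, u)))
    (S : Set (FiniteMeasure (ℝ × ℝ))) (hScomp : IsCompact S)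
    (hSsub : S ⊆ {μ | ∃ z : ℝ, 0 ≤ z ∧ μ = τ z}) :
    ∀ ε : ℝ, 0 < ε → ∀ R : ℝ, 0 < R → ∃ κ : ℝ, 0 < κ ∧ ∀ μ ∈ S,
      (∀ x : ℝ, x ∈ Icc (0 : ℝ) R →
        (μ : Measure (ℝ × ℝ)) (Icc x (x + κ) ×ˢ (univ : Set ℝ)) ≤ ENNReal.ofReal ε) ∧
      (∀ y : ℝ, y ∈ Icc (-R) R →
        (μ : Measure (ℝ × ℝ)) (Ici (0 : ℝ) ×ˢ Icc y (y + κ)) ≤ ENNReal.ofReal ε) := by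
  intro ε hε R hR
  by_cases hSne : S.Nonempty
  swap
  · rw [Set.not_nonempty_iff_eq_empty] at hSne
    exact ⟨1, one_pos, fun μ hμ => by simp [hSne] at hμ⟩
  -- uniform mass bound on S
  obtain ⟨μ0, hμ0S, hμ0max⟩ := hScomp.exists_isMaxOn hSne
    MeasureTheory.FiniteMeasure.continuous_mass.continuousOn
  set Z : ℝ≥0 := μ0.mass with hZ
  -- a point mass level: find a > 0 with ϑ {p | a ≤ p.1} ≠ 0
  have h1 : ϑ {p : ℝ × ℝ | 0 < p.1} ≠ 0 := by
    intro h
    have hcover : (univ : Set (ℝ × ℝ)) ⊆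
        ({p : ℝ × ℝ | p.1 < 0} ∪ {p : ℝ × ℝ | p.1 = 0}) ∪ {p : ℝ × ℝ | 0 < p.1} := by
      intro p _
      rcases lt_trichotomy p.1 0 with hp | hp | hp
      · exact Or.inl (Or.inl hp)
      · exact Or.inl (Or.inr hp)
      · exact Or.inr hp
    have : ϑ univ ≤ 0 := by
      calc ϑ univ ≤ ϑ (({p : ℝ × ℝ | p.1 < 0} ∪ {p : ℝ × ℝ | p.1 = 0}) ∪ {p : ℝ × ℝ | 0 < p.1}) :=
            measure_mono hcover
        _ ≤ (ϑ {p : ℝ × ℝ | p.1 < 0} + ϑ {p : ℝ × ℝ | p.1 = 0}) + ϑ {p : ℝ × ℝ | 0 < p.1} :=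
            le_trans (measure_union_le _ _) (add_le_add_left (measure_union_le _ _) _)
        _ = 0 := by rw [hϑsupp, hϑ0, h]; simp
    simp [measure_univ] at this
  have h2 : ∃ a : ℝ, 0 < a ∧ ϑ {p : ℝ × ℝ | a ≤ p.1} ≠ 0 := by
    by_contra hno
    push_neg at hno
    apply h1
    have hsub : {p : ℝ × ℝ | 0 < p.1} ⊆ ⋃ n : ℕ, {p : ℝ × ℝ | ((n : ℝ) + 1)⁻¹ ≤ p.1} := by
      intro p hp
      have hp' : (0:ℝ) < p.1 := hp
      obtain ⟨n, hn⟩ := exists_nat_gt p.1⁻¹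
      refine mem_iUnion.mpr ⟨n, ?_⟩
      have hle : p.1⁻¹ ≤ (n : ℝ) + 1 := by linarith
      exact (inv_le_comm₀ hp' (by positivity)).mp hle
    refine measure_mono_null hsub (measure_iUnion_null fun n => ?_)
    exact hno _ (by positivity)
  obtain ⟨a, ha0, hc0⟩ := h2
  set c : ℝ≥0∞ := ϑ {p : ℝ × ℝ | a ≤ p.1} with hc
  have hc_top : c ≠ ∞ := (measure_lt_top ϑ _).ne
  -- the bound on z
  set T : ℝ := ((Z : ℝ≥0∞) / c).toReal with hT
  set Zr : ℝ := max (T / (α * a)) 0 with hZr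
  have hZr0 : (0:ℝ) ≤ Zr := le_max_right _ _
  set κ : ℝ := ε / (α * (Zr + 1)) with hκdef
  have hκ0 : 0 < κ := div_pos hε (by positivity)
  have hεκ : α * (Zr + 1) * κ = ε := by
    rw [hκdef]; field_simp
  refine ⟨κ, hκ0, fun μ hμS => ?_⟩
  obtain ⟨z, hz0, hμz⟩ := hSsub hμS
  rcases hz0.eq_or_lt with hz | hz
  · constructor <;> intro _ _ <;> rw [hμz, ← hz, hτ0] <;> simp
  -- z > 0; first show z ≤ Zr
  have hHm : MeasurableSet Hplus := measurableSet_le measurable_const measurable_fst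
  have hform := hτ z hz Hplus hHm subset_rfl
  have hshift : ∀ u : ℝ, shiftSet Hplus (u / z, u) = {p : ℝ × ℝ | u / z ≤ p.1} := by
    intro u
    rw [shiftSet_eq]
    ext p
    simp [Hplus, sub_nonneg]
  have hlow : c * ENNReal.ofReal (z * a) ≤ ∫⁻ u in Ioi (0:ℝ), ϑ (shiftSet Hplus (u / z, u)) := by
    calc c * ENNReal.ofReal (z * a)
        = ∫⁻ _ in Ioc (0:ℝ) (z * a), c := by
          rw [setLIntegral_const, Real.volume_Ioc]; simp
      _ ≤ ∫⁻ u in Ioc (0:ℝ) (z * a), ϑ (shiftSet Hplus (u / z, u)) := by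
          refine lintegral_mono_ae ((ae_restrict_iff' measurableSet_Ioc).mpr
            (ae_of_all _ fun u hu => ?_))
          rw [hshift u]
          refine measure_mono fun p hp => ?_
          have h1 : u / z ≤ a := (div_le_iff₀ hz).mpr (by rw [mul_comm]; exact hu.2)
          exact le_trans h1 hp
      _ ≤ ∫⁻ u in Ioi (0:ℝ), ϑ (shiftSet Hplus (u / z, u)) :=
          lintegral_mono_set Ioc_subset_Ioi_self
  have hub : ENNReal.ofReal α * (c * ENNReal.ofReal (z * a)) ≤ (Z : ℝ≥0∞) := by
    calc ENNReal.ofReal α * (c * ENNReal.ofReal (z * a))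
        ≤ ENNReal.ofReal α * ∫⁻ u in Ioi (0:ℝ), ϑ (shiftSet Hplus (u / z, u)) :=
          mul_le_mul_right hlow _
      _ = (τ z : Measure (ℝ × ℝ)) Hplus := hform.symm
      _ ≤ (τ z : Measure (ℝ × ℝ)) univ := measure_mono (subset_univ _)
      _ = ((τ z).mass : ℝ≥0∞) := MeasureTheory.FiniteMeasure.ennreal_mass.symm
      _ ≤ (Z : ℝ≥0∞) := by
          exact_mod_cast hμ0max (hμz ▸ hμS)
  have hub' : ENNReal.ofReal (α * (z * a)) * c ≤ (Z : ℝ≥0∞) := by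
    rwa [show ENNReal.ofReal α * (c * ENNReal.ofReal (z * a))
        = ENNReal.ofReal (α * (z * a)) * c by rw [ENNReal.ofReal_mul hα.le]; ring] at hub
  have hdiv : ENNReal.ofReal (α * (z * a)) ≤ (Z : ℝ≥0∞) / c :=
    (ENNReal.le_div_iff_mul_le (b := c) (c := (Z : ℝ≥0∞)) (Or.inl hc0) (Or.inl hc_top)).mpr hub'
  have hdivfin : (Z : ℝ≥0∞) / c ≠ ∞ := (ENNReal.div_lt_top ENNReal.coe_ne_top hc0).ne
  have hreal : α * (z * a) ≤ T := (ENNReal.ofReal_le_iff_le_toReal hdivfin).mp hdiv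
  have hzZr : z ≤ Zr := by
    have h1 : z ≤ T / (α * a) := by
      rw [le_div_iff₀ (by positivity)]
      calc z * (α * a) = α * (z * a) := by ring
        _ ≤ T := hreal
    exact h1.trans (le_max_left _ _)
  constructor
  · -- vertical strips
    intro x hx
    have hBm : MeasurableSet (Icc x (x + κ) ×ˢ (univ : Set ℝ)) :=
      measurableSet_Icc.prod MeasurableSet.univ
    have hBsub : Icc x (x + κ) ×ˢ (univ : Set ℝ) ⊆ Hplus := fun p hp =>
      le_trans hx.1 hp.1.1
    rw [hμz, hτ z hz _ hBm hBsub]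
    have heq : ∀ u : ℝ, ϑ (shiftSet (Icc x (x + κ) ×ˢ (univ : Set ℝ)) (u / z, u))
        = ϑ {p : ℝ × ℝ | (fun q : ℝ × ℝ => z * (q.1 - x - κ)) p ≤ u ∧
            u ≤ (fun q : ℝ × ℝ => z * (q.1 - x - κ)) p + z * κ} := by
      intro u
      congr 1
      rw [shiftSet_eq]
      ext p
      simp only [mem_preimage, mem_prod, mem_Icc, mem_univ, and_true, Prod.fst_sub,
        mem_setOf_eq]
      exact cond_iff z u x κ p.1 hz
    calc ENNReal.ofReal α * ∫⁻ u in Ioi (0:ℝ),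
          ϑ (shiftSet (Icc x (x + κ) ×ˢ (univ : Set ℝ)) (u / z, u))
        = ENNReal.ofReal α * ∫⁻ u in Ioi (0:ℝ),
          ϑ {p : ℝ × ℝ | (fun q : ℝ × ℝ => z * (q.1 - x - κ)) p ≤ u ∧
            u ≤ (fun q : ℝ × ℝ => z * (q.1 - x - κ)) p + z * κ} := by
          rw [lintegral_congr fun u => heq u]
      _ ≤ ENNReal.ofReal α * ENNReal.ofReal (z * κ) :=
          mul_le_mul_right (strip_lintegral_le ϑ _
            (((measurable_fst.sub_const x).sub_const κ).const_mul z) (z * κ)) _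
      _ = ENNReal.ofReal (α * (z * κ)) := (ENNReal.ofReal_mul hα.le).symm
      _ ≤ ENNReal.ofReal ε := by
          refine ENNReal.ofReal_le_ofReal ?_
          nlinarith [hεκ, hκ0.le, hα.le, hzZr]
  · -- horizontal strips
    intro y hy
    have hBm : MeasurableSet (Ici (0:ℝ) ×ˢ Icc y (y + κ)) :=
      measurableSet_Ici.prod measurableSet_Icc
    have hBsub : Ici (0:ℝ) ×ˢ Icc y (y + κ) ⊆ Hplus := fun p hp => hp.1
    rw [hμz, hτ z hz _ hBm hBsub]
    have hle : ∀ u : ℝ, ϑ (shiftSet (Ici (0:ℝ) ×ˢ Icc y (y + κ)) (u / z, u))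
        ≤ ϑ {p : ℝ × ℝ | (fun q : ℝ × ℝ => q.2 - y - κ) p ≤ u ∧
            u ≤ (fun q : ℝ × ℝ => q.2 - y - κ) p + κ} := by
      intro u
      refine measure_mono fun p hp => ?_
      rw [shiftSet_eq] at hp
      simp only [mem_preimage, mem_prod, mem_Ici, mem_Icc, Prod.fst_sub, Prod.snd_sub] at hp
      constructor <;> simp only [] <;> [linarith [hp.2.2]; linarith [hp.2.1]]
    calc ENNReal.ofReal α * ∫⁻ u in Ioi (0:ℝ),
          ϑ (shiftSet (Ici (0:ℝ) ×ˢ Icc y (y + κ)) (u / z, u))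
        ≤ ENNReal.ofReal α * ∫⁻ u in Ioi (0:ℝ),
          ϑ {p : ℝ × ℝ | (fun q : ℝ × ℝ => q.2 - y - κ) p ≤ u ∧
            u ≤ (fun q : ℝ × ℝ => q.2 - y - κ) p + κ} :=
          mul_le_mul_right (lintegral_mono fun u => hle u) _
      _ ≤ ENNReal.ofReal α * ENNReal.ofReal κ :=
          mul_le_mul_right (strip_lintegral_le ϑ _
            ((measurable_snd.sub_const y).sub_const κ) κ) _
      _ = ENNReal.ofReal (α * κ) := (ENNReal.ofReal_mul hα.le).symm
      _ ≤ ENNReal.ofReal ε := by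
          refine ENNReal.ofReal_le_ofReal ?_
          nlinarith [hεκ, hκ0.le, hα.le, hZr0]
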